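/- Let n ≥ 2, G = SL_n over a field k of characteristic 0, T the diagonal maximal torus and N its normalizer in G. Then the character group of N̄ (homomorphisms N_{k̄} → G_m) is isomorphic to ℤ/2ℤ; specifically T̄ is contained in the derived group of N̄, so characters of N̄ factor through N̄/T̄ ≅ S_n, and X^*(S_n) ≅ ℤ/2ℤ via the sign character. -/

import Mathlib

/-!
STATEMENT 14: Let `n ≥ 2`, `G = SL_n` over a field `k` of characteristic 0,
`T` the diagonal maximal torus and `N` its normalizer in `G`.  Then the
character group of `N̄` (homomorphisms `N_{k̄} → G_m`) is isomorphic to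
`ℤ/2ℤ`; specifically `T̄` is contained in the derived group of `N̄`, so
characters of `N̄` factor through `N̄/T̄ ≅ S_n`, and `X^*(S_n) ≅ ℤ/2ℤ` via the
sign character.

Formalization: we work over an algebraically closed field `K` of
characteristic 0 (the `k̄`-points).  `SL n K` is `Matrix.SpecialLinearGroup`,
`T` the subgroup of diagonal matrices, `N = T.normalizer`.  Since any
character kills the derived group and `T ⊆ [N,N]`, the algebraic characters
of `N` coincide with the abstract group homomorphisms `N →* Kˣ`; the claim is
that this character group is isomorphic to `ℤ/2ℤ`, together with the
auxiliary assertion `T ≤ [N,N]`.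
-/

open Matrix

variable (n : ℕ) (K : Type*) [Field K] [IsAlgClosed K] [CharZero K]

/-- The diagonal maximal torus of `SL_n`. -/
def diagonalTorus : Subgroup (Matrix.SpecialLinearGroup (Fin n) K) where
  carrier := {A | (A : Matrix (Fin n) (Fin n) K).IsDiag}
  one_mem' := by
    show (Matrix.IsDiag _)
    simpa using Matrix.isDiag_one
  mul_mem' := by
    intro A B hA hB
    intro i j hij
    show ((A : Matrix (Fin n) (Fin n) K) * (B : Matrix (Fin n) (Fin n) K)) i j = 0
    rw [Matrix.mul_apply]
    apply Finset.sum_eq_zero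
    intro k _
    by_cases hk : i = k
    · subst hk
      rw [hB (hij : i ≠ j), mul_zero]
    · rw [hA (hk : i ≠ k), zero_mul]
  inv_mem' := by
    intro A hA
    show (Matrix.IsDiag _)
    rw [Matrix.SpecialLinearGroup.coe_inv, ← Matrix.IsDiag.diagonal_diag hA,
      Matrix.adjugate_diagonal]
    exact Matrix.isDiag_diagonal _

open Matrix Equiv
open scoped commutatorElement
set_option linter.unusedSectionVars false

namespace SLChar

variable {n : ℕ} {K : Type*} [Field K]

/-- sign of a permutation as an element of `K`. -/
noncomputable def eps (σ : Perm (Fin n)) : K := ((Perm.sign σ : ℤ) : K)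

lemma eps_eq_one_or (σ : Perm (Fin n)) : (eps σ : K) = 1 ∨ (eps σ : K) = -1 := by
  rcases Int.units_eq_one_or (Perm.sign σ) with h | h <;> simp [eps, h]

lemma eps_mul_self (σ : Perm (Fin n)) : (eps σ : K) * eps σ = 1 := by
  rcases eps_eq_one_or (K := K) σ with h | h <;> rw [h] <;> ring

lemma eps_ne_zero (σ : Perm (Fin n)) : (eps σ : K) ≠ 0 := by
  rcases eps_eq_one_or (K := K) σ with h | h <;> rw [h] <;> simp

variable [NeZero n]

/-- diagonal sign-fixing matrix. -/
noncomputable def Dmat (σ : Perm (Fin n)) : Matrix (Fin n) (Fin n) K :=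
  diagonal (fun i => if i = 0 then eps σ else 1)

/-- signed permutation matrix with determinant 1. -/
noncomputable def wMat (σ : Perm (Fin n)) : Matrix (Fin n) (Fin n) K :=
  Dmat σ * σ.permMatrix K

lemma permMatrix_apply (σ : Perm (Fin n)) (i j : Fin n) :
    (σ.permMatrix K) i j = if σ i = j then 1 else 0 := by
  simp [Equiv.Perm.permMatrix, PEquiv.toMatrix_apply, Equiv.toPEquiv_apply, Option.mem_def]

lemma wMat_apply (σ : Perm (Fin n)) (i j : Fin n) :
    wMat σ i j = if σ i = j then (if i = 0 then (eps σ : K) else 1) else 0 := by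
  rw [wMat, Dmat, diagonal_mul, permMatrix_apply]
  by_cases h : σ i = j <;> simp [h]

lemma det_Dmat (σ : Perm (Fin n)) : (Dmat σ : Matrix (Fin n) (Fin n) K).det = eps σ := by
  rw [Dmat, det_diagonal]
  rw [Finset.prod_ite_eq' Finset.univ (0 : Fin n) (fun _ => (eps σ : K))]
  simp

lemma det_wMat (σ : Perm (Fin n)) : (wMat σ : Matrix (Fin n) (Fin n) K).det = 1 := by
  rw [wMat, det_mul, det_Dmat, det_permutation]
  exact eps_mul_self σ

/-- the signed permutation matrix as an element of `SL_n`. -/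
noncomputable def w (σ : Perm (Fin n)) : Matrix.SpecialLinearGroup (Fin n) K :=
  ⟨wMat σ, det_wMat σ⟩

/-- `M` is monomial with underlying (co)permutation `f`. -/
def PermOf (M : Matrix (Fin n) (Fin n) K) (f : Fin n → Fin n) : Prop :=
  ∀ i j, M i j ≠ 0 → j = f i

lemma permOf_w (σ : Perm (Fin n)) : PermOf (wMat σ : Matrix (Fin n) (Fin n) K) ⇑σ := by
  intro i j h
  rw [wMat_apply] at h
  by_cases hc : σ i = j
  · exact hc.symm
  · simp [hc] at h

lemma permOf_mul {M M' : Matrix (Fin n) (Fin n) K} {f g : Fin n → Fin n}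
    (hM : PermOf M f) (hM' : PermOf M' g) : PermOf (M * M') (g ∘ f) := by
  intro i j h
  rw [mul_apply] at h
  obtain ⟨k, -, hk⟩ := Finset.exists_ne_zero_of_sum_ne_zero h
  have h1 : M i k ≠ 0 := fun hz => hk (by simp [hz])
  have h2 : M' k j ≠ 0 := fun hz => hk (by simp [hz])
  have := hM i k h1
  have := hM' k j h2
  subst this; simp [hM i k h1]

lemma isDiag_of_permOf_id {M : Matrix (Fin n) (Fin n) K} (h : PermOf M id) : M.IsDiag := by
  intro i j hij
  by_contra hz
  exact hij (h i j hz).symm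

lemma permOf_of_isDiag {M : Matrix (Fin n) (Fin n) K} (h : M.IsDiag) : PermOf M id := by
  intro i j hz
  by_contra hij
  exact hz (h (fun hh => hij hh.symm))

lemma permOf_mul_diagonal {M : Matrix (Fin n) (Fin n) K} {σ : Perm (Fin n)}
    (h : PermOf M ⇑σ) (d : Fin n → K) :
    M * diagonal d = diagonal (fun i => d (σ i)) * M := by
  ext i j
  rw [mul_diagonal, diagonal_mul]
  by_cases hz : M i j = 0
  · simp [hz]
  · have := h i j hz
    subst this
    ring


lemma permMatrix_mul_permMatrix (σ τ : Perm (Fin n)) :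
    (σ.permMatrix K) * (τ.permMatrix K) = Equiv.Perm.permMatrix K (σ.trans τ) := by
  show _ = (σ.trans τ).toPEquiv.toMatrix
  rw [Equiv.toPEquiv_trans, PEquiv.toMatrix_trans]

lemma Dmat_mul_Dmat (σ : Perm (Fin n)) : (Dmat σ : Matrix (Fin n) (Fin n) K) * Dmat σ = 1 := by
  rw [Dmat, diagonal_mul_diagonal]
  have : (fun i : Fin n => (if i = 0 then (eps σ : K) else 1) * (if i = 0 then (eps σ : K) else 1))
      = fun _ => 1 := by
    funext i
    by_cases h : i = 0 <;> simp [h, eps_mul_self]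
  rw [this, diagonal_one]

/-- explicit inverse of `wMat`. -/
noncomputable def vMat (σ : Perm (Fin n)) : Matrix (Fin n) (Fin n) K :=
  (σ⁻¹.permMatrix K) * Dmat σ

lemma permOf_permMatrix (σ : Perm (Fin n)) :
    PermOf (σ.permMatrix K : Matrix (Fin n) (Fin n) K) ⇑σ := by
  intro i j h
  rw [permMatrix_apply] at h
  by_cases hc : σ i = j
  · exact hc.symm
  · simp [hc] at h

lemma permOf_Dmat (σ : Perm (Fin n)) : PermOf (Dmat σ : Matrix (Fin n) (Fin n) K) id := by
  apply permOf_of_isDiag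
  exact isDiag_diagonal _

lemma permOf_vMat (σ : Perm (Fin n)) : PermOf (vMat σ : Matrix (Fin n) (Fin n) K) ⇑σ⁻¹ := by
  have := permOf_mul (permOf_permMatrix (K := K) σ⁻¹) (permOf_Dmat (K := K) σ)
  simpa [vMat] using this

lemma wMat_mul_vMat (σ : Perm (Fin n)) :
    (wMat σ : Matrix (Fin n) (Fin n) K) * vMat σ = 1 := by
  have hP : (σ.permMatrix K) * (σ⁻¹.permMatrix K) = 1 := by
    rw [permMatrix_mul_permMatrix]
    have : σ.trans σ⁻¹ = Equiv.refl (Fin n) := by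
      ext x; simp
    rw [this]
    show (Equiv.refl (Fin n)).toPEquiv.toMatrix = 1
    rw [Equiv.toPEquiv_refl, PEquiv.toMatrix_refl]
  calc wMat σ * vMat σ = Dmat σ * ((σ.permMatrix K) * (σ⁻¹.permMatrix K)) * Dmat σ := by
        rw [wMat, vMat]; noncomm_ring
    _ = 1 := by rw [hP, mul_one, Dmat_mul_Dmat]

lemma det_vMat (σ : Perm (Fin n)) : (vMat σ : Matrix (Fin n) (Fin n) K).det = 1 := by
  have := congrArg Matrix.det (wMat_mul_vMat (K := K) σ)
  rw [det_mul, det_wMat, one_mul, det_one] at this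
  exact this

noncomputable def v (σ : Perm (Fin n)) : Matrix.SpecialLinearGroup (Fin n) K :=
  ⟨vMat σ, det_vMat σ⟩

lemma w_inv (σ : Perm (Fin n)) : (w σ : Matrix.SpecialLinearGroup (Fin n) K)⁻¹ = v σ := by
  apply inv_eq_of_mul_eq_one_right
  apply Subtype.ext
  show (wMat σ : Matrix (Fin n) (Fin n) K) * vMat σ = 1
  exact wMat_mul_vMat σ

lemma exists_row_ne_zero (x : Matrix.SpecialLinearGroup (Fin n) K) (i : Fin n) :
    ∃ j, (x : Matrix (Fin n) (Fin n) K) i j ≠ 0 := by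
  by_contra h
  push_neg at h
  have : (x : Matrix (Fin n) (Fin n) K).det = 0 := det_eq_zero_of_row_eq_zero i h
  rw [x.2] at this
  exact one_ne_zero this

lemma permOf_unique {x : Matrix.SpecialLinearGroup (Fin n) K} {f g : Fin n → Fin n}
    (hf : PermOf (x : Matrix (Fin n) (Fin n) K) f)
    (hg : PermOf (x : Matrix (Fin n) (Fin n) K) g) : f = g := by
  funext i
  obtain ⟨j, hj⟩ := exists_row_ne_zero x i
  rw [← hf i j hj, ← hg i j hj]

lemma mem_torus_iff {x : Matrix.SpecialLinearGroup (Fin n) K} :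
    x ∈ diagonalTorus n K ↔ (x : Matrix (Fin n) (Fin n) K).IsDiag := Iff.rfl

section conj

variable {σ : Perm (Fin n)}

lemma conj_w_mem {x : Matrix.SpecialLinearGroup (Fin n) K} (hx : x ∈ diagonalTorus n K) :
    w σ * x * (w σ)⁻¹ ∈ diagonalTorus n K := by
  rw [mem_torus_iff]
  apply isDiag_of_permOf_id
  have hcoe : ((w σ * x * (w σ)⁻¹ : Matrix.SpecialLinearGroup (Fin n) K) : Matrix (Fin n) (Fin n) K)
      = wMat σ * (x : Matrix (Fin n) (Fin n) K) * vMat σ := by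
    rw [w_inv]
    simp [w, v]
    rfl
  rw [hcoe]
  have h := permOf_mul (permOf_mul (permOf_w σ) (permOf_of_isDiag hx)) (permOf_vMat σ)
  have heq : (⇑σ⁻¹ ∘ (id ∘ ⇑σ)) = (id : Fin n → Fin n) := by
    funext i; simp
  rwa [heq] at h

lemma conj_w_inv_mem {x : Matrix.SpecialLinearGroup (Fin n) K} (hx : x ∈ diagonalTorus n K) :
    (w σ)⁻¹ * x * w σ ∈ diagonalTorus n K := by
  rw [mem_torus_iff]
  apply isDiag_of_permOf_id
  have hcoe : (((w σ)⁻¹ * x * w σ : Matrix.SpecialLinearGroup (Fin n) K) : Matrix (Fin n) (Fin n) K)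
      = vMat σ * (x : Matrix (Fin n) (Fin n) K) * wMat σ := by
    rw [w_inv]
    simp [w, v]
    rfl
  rw [hcoe]
  have h := permOf_mul (permOf_mul (permOf_vMat σ) (permOf_of_isDiag hx)) (permOf_w σ)
  have heq : (⇑σ ∘ (id ∘ ⇑σ⁻¹)) = (id : Fin n → Fin n) := by
    funext i; simp
  rwa [heq] at h

lemma w_mem_normalizer (σ : Perm (Fin n)) :
    (w σ : Matrix.SpecialLinearGroup (Fin n) K) ∈ (Subgroup.normalizer (diagonalTorus n K : Set (Matrix.SpecialLinearGroup (Fin n) K))) := by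
  rw [Subgroup.mem_normalizer_iff]
  intro x
  constructor
  · exact conj_w_mem
  · intro hx
    have h := conj_w_inv_mem (σ := σ) hx
    have : (w σ)⁻¹ * (w σ * x * (w σ)⁻¹) * w σ = x := by group
    rwa [this] at h

/-- `w σ` as an element of the normalizer `N`. -/
noncomputable def wN (σ : Perm (Fin n)) : (Subgroup.normalizer (diagonalTorus n K : Set (Matrix.SpecialLinearGroup (Fin n) K))) :=
  ⟨w σ, w_mem_normalizer σ⟩

lemma factor_mem_torus {x : Matrix.SpecialLinearGroup (Fin n) K}
    (h : PermOf (x : Matrix (Fin n) (Fin n) K) ⇑σ) :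
    x * (w σ)⁻¹ ∈ diagonalTorus n K := by
  rw [mem_torus_iff]
  apply isDiag_of_permOf_id
  have hcoe : ((x * (w σ)⁻¹ : Matrix.SpecialLinearGroup (Fin n) K) : Matrix (Fin n) (Fin n) K)
      = (x : Matrix (Fin n) (Fin n) K) * vMat σ := by
    rw [w_inv]
    simp [v]
    rfl
  rw [hcoe]
  have hh := permOf_mul h (permOf_vMat σ)
  have heq : (⇑σ⁻¹ ∘ ⇑σ) = (id : Fin n → Fin n) := by
    funext i; simp
  rwa [heq] at hh

end conj

variable [IsAlgClosed K] [CharZero K]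

lemma exists_good_diag : ∃ d : Fin n → K,
    Function.Injective d ∧ (∀ i, d i ≠ 0) ∧ ∏ i, d i = 1 := by
  set x : Fin n → K := fun i => (((i : ℕ) + 1 : ℕ) : K) with hxdef
  have hxinj : Function.Injective x := by
    intro a b hab
    have h1 : ((a : ℕ) + 1 : ℕ) = ((b : ℕ) + 1 : ℕ) := Nat.cast_injective hab
    exact Fin.ext (Nat.succ_injective h1)
  have hx0 : ∀ i, x i ≠ 0 := fun i => Nat.cast_ne_zero.mpr (Nat.succ_ne_zero _)
  have hp : (∏ i, x i) ≠ 0 := Finset.prod_ne_zero_iff.mpr fun i _ => hx0 i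
  obtain ⟨y, hy⟩ := IsAlgClosed.exists_pow_nat_eq (k := K) (∏ i, x i)⁻¹
    (Nat.pos_of_ne_zero (NeZero.ne n))
  have hy0 : y ≠ 0 := by
    intro h
    rw [h, zero_pow (NeZero.ne n)] at hy
    exact hp (inv_eq_zero.mp hy.symm)
  refine ⟨fun i => y * x i, ?_, fun i => mul_ne_zero hy0 (hx0 i), ?_⟩
  · intro a b hab
    exact hxinj (mul_left_cancel₀ hy0 hab)
  · rw [Finset.prod_mul_distrib, Finset.prod_const, Finset.card_univ, Fintype.card_fin, hy]
    exact inv_mul_cancel₀ hp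

lemma exists_permOf {g : Matrix.SpecialLinearGroup (Fin n) K}
    (hg : g ∈ (Subgroup.normalizer (diagonalTorus n K : Set (Matrix.SpecialLinearGroup (Fin n) K)))) :
    ∃ σ : Perm (Fin n), PermOf (g : Matrix (Fin n) (Fin n) K) ⇑σ := by
  obtain ⟨d, hdinj, hd0, hdprod⟩ := exists_good_diag (n := n) (K := K)
  have hdet : (diagonal d).det = 1 := by rw [det_diagonal, hdprod]
  set t : Matrix.SpecialLinearGroup (Fin n) K := ⟨diagonal d, hdet⟩ with htdef
  have ht : t ∈ diagonalTorus n K := isDiag_diagonal d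
  have hst : g * t * g⁻¹ ∈ diagonalTorus n K := (Subgroup.mem_normalizer_iff.mp hg t).mp ht
  set s := g * t * g⁻¹ with hs
  have h1 : s * g = g * t := by rw [hs]; group
  have h2 : (s : Matrix (Fin n) (Fin n) K) * g = (g : Matrix (Fin n) (Fin n) K) * diagonal d := by
    have := congrArg (fun z : Matrix.SpecialLinearGroup (Fin n) K =>
      (z : Matrix (Fin n) (Fin n) K)) h1
    exact this
  have hmat : (g : Matrix (Fin n) (Fin n) K) * diagonal d
      = diagonal ((s : Matrix (Fin n) (Fin n) K).diag) * g := by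
    rw [Matrix.IsDiag.diagonal_diag hst]
    exact h2.symm
  have key : ∀ i j, (g : Matrix (Fin n) (Fin n) K) i j ≠ 0 →
      d j = (s : Matrix (Fin n) (Fin n) K).diag i := by
    intro i j hj
    have he := congrFun (congrFun hmat i) j
    rw [mul_diagonal, diagonal_mul] at he
    rw [mul_comm ((g : Matrix (Fin n) (Fin n) K) i j) (d j)] at he
    exact mul_right_cancel₀ hj he
  have key2 : ∀ i, ∃ j, ∀ j', (g : Matrix (Fin n) (Fin n) K) i j' ≠ 0 → j' = j := by
    intro i
    obtain ⟨j, hj⟩ := exists_row_ne_zero g i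
    refine ⟨j, fun j' hj' => ?_⟩
    apply hdinj
    rw [key i j hj, key i j' hj']
  choose f hf using key2
  have hsurj : Function.Surjective f := by
    intro j
    by_contra hj
    push_neg at hj
    have hcol : ∀ i, (g : Matrix (Fin n) (Fin n) K) i j = 0 := by
      intro i
      by_contra hz
      exact hj i (hf i j hz).symm
    have hdet0 : (g : Matrix (Fin n) (Fin n) K).det = 0 := det_eq_zero_of_column_eq_zero j hcol
    rw [g.2] at hdet0
    exact one_ne_zero hdet0
  have hinj : Function.Injective f := Finite.injective_iff_surjective.mpr hsurj
  exact ⟨Equiv.ofBijective f ⟨hinj, hsurj⟩, fun i j h => hf i j h⟩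

/-- coercion `SL_n → Matrix` as a monoid hom. -/
def coeSL : Matrix.SpecialLinearGroup (Fin n) K →* Matrix (Fin n) (Fin n) K where
  toFun g := g
  map_one' := by simp
  map_mul' := by simp

def elFun (i j : Fin n) (a : K) : Fin n → K :=
  fun k => if k = i then a else if k = j then a⁻¹ else 1

lemma prod_elFun {i j : Fin n} (hij : i ≠ j) {a : K} (ha : a ≠ 0) :
    ∏ k, elFun i j a k = 1 := by
  have h1 : ∏ k, elFun i j a k = ∏ k ∈ ({i, j} : Finset (Fin n)), elFun i j a k := by
    refine (Finset.prod_subset (Finset.subset_univ _) ?_).symm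
    intro x _ hx
    simp only [Finset.mem_insert, Finset.mem_singleton, not_or] at hx
    simp [elFun, hx.1, hx.2]
  rw [h1, Finset.prod_pair hij]
  have h2 : elFun i j a i = a := by simp [elFun]
  have h3 : elFun i j a j = a⁻¹ := by simp [elFun, Ne.symm hij]
  rw [h2, h3, mul_inv_cancel₀ ha]

noncomputable def elSL (i j : Fin n) (a : K) (hij : i ≠ j) (ha : a ≠ 0) :
    Matrix.SpecialLinearGroup (Fin n) K :=
  ⟨diagonal (elFun i j a), by rw [det_diagonal]; exact prod_elFun hij ha⟩

lemma elSL_mem_torus (i j : Fin n) (a : K) (hij : i ≠ j) (ha : a ≠ 0) :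
    elSL i j a hij ha ∈ diagonalTorus n K := isDiag_diagonal _

lemma elFun_mul (i j : Fin n) (b c : K) :
    (fun k => elFun i j b k * elFun i j c k) = elFun i j (b * c) := by
  funext k
  by_cases h1 : k = i
  · simp [elFun, h1]
  · by_cases h2 : k = j
    · have hji : ¬ j = i := fun h => h1 (h2.trans h)
      simp [elFun, h1, h2, hji, mul_inv, mul_comm]
    · simp [elFun, h1, h2]

lemma elSL_mul (i j : Fin n) (b c : K) (hij : i ≠ j) (hb : b ≠ 0) (hc : c ≠ 0) :
    elSL i j b hij hb * elSL i j c hij hc = elSL i j (b * c) hij (mul_ne_zero hb hc) := by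
  apply Subtype.ext
  show diagonal (elFun i j b) * diagonal (elFun i j c) = diagonal (elFun i j (b * c))
  rw [diagonal_mul_diagonal]
  exact congrArg _ (elFun_mul i j b c)

lemma elFun_one (i j : Fin n) : elFun i j (1 : K) = fun _ => 1 := by
  funext k
  by_cases h1 : k = i
  · simp [elFun, h1]
  · by_cases h2 : k = j <;> simp [elFun, h1, h2]

lemma elSL_inv (i j : Fin n) (b : K) (hij : i ≠ j) (hb : b ≠ 0) :
    (elSL i j b hij hb)⁻¹ = elSL i j b⁻¹ hij (inv_ne_zero hb) := by
  apply inv_eq_of_mul_eq_one_right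
  rw [elSL_mul]
  apply Subtype.ext
  show diagonal (elFun i j (b * b⁻¹)) = 1
  rw [mul_inv_cancel₀ hb, elFun_one, diagonal_one]

lemma w_mul_elSL (i j : Fin n) (b : K) (hij : i ≠ j) (hb : b ≠ 0) :
    w (Equiv.swap i j) * elSL i j b hij hb
      = elSL i j b⁻¹ hij (inv_ne_zero hb) * w (Equiv.swap i j) := by
  apply Subtype.ext
  show wMat (Equiv.swap i j) * diagonal (elFun i j b)
      = diagonal (elFun i j b⁻¹) * wMat (Equiv.swap i j)
  have hfun : (fun k => elFun i j b (Equiv.swap i j k)) = elFun i j (b⁻¹ : K) := by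
    funext k
    by_cases h1 : k = i
    · subst h1
      rw [Equiv.swap_apply_left]
      simp [elFun, Ne.symm hij]
    · by_cases h2 : k = j
      · subst h2
        rw [Equiv.swap_apply_right]
        simp [elFun, Ne.symm hij, hij, inv_inv]
      · rw [Equiv.swap_apply_of_ne_of_ne h1 h2]
        simp [elFun, h1, h2]
  rw [permOf_mul_diagonal (permOf_w (Equiv.swap i j)), hfun]

lemma el_commutator (i j : Fin n) (b : K) (hij : i ≠ j) (hb : b ≠ 0) :
    ⁅(w (Equiv.swap i j) : Matrix.SpecialLinearGroup (Fin n) K), elSL i j b hij hb⁆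
      = elSL i j (b⁻¹ * b⁻¹) hij (mul_ne_zero (inv_ne_zero hb) (inv_ne_zero hb)) := by
  rw [commutatorElement_def]
  have h1 : w (Equiv.swap i j) * elSL i j b hij hb * (w (Equiv.swap i j))⁻¹
      = elSL i j b⁻¹ hij (inv_ne_zero hb) := by
    rw [mul_inv_eq_iff_eq_mul]
    exact w_mul_elSL i j b hij hb
  rw [h1, elSL_inv, elSL_mul]

/-- elementary torus elements as elements of the normalizer. -/
noncomputable def elN (i j : Fin n) (a : K) (hij : i ≠ j) (ha : a ≠ 0) :
    ↥(Subgroup.normalizer (diagonalTorus n K : Set (Matrix.SpecialLinearGroup (Fin n) K))) :=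
  ⟨elSL i j a hij ha, Subgroup.le_normalizer (elSL_mem_torus i j a hij ha)⟩

lemma elN_mem_commutator (i j : Fin n) (a : K) (hij : i ≠ j) (ha : a ≠ 0) :
    elN i j a hij ha ∈ commutator ↥(Subgroup.normalizer (diagonalTorus n K : Set (Matrix.SpecialLinearGroup (Fin n) K))) := by
  obtain ⟨b, hb⟩ := IsAlgClosed.exists_pow_nat_eq (k := K) a⁻¹ zero_lt_two
  have hb0 : b ≠ 0 := by
    intro h
    rw [h, zero_pow two_ne_zero] at hb
    exact ha (inv_eq_zero.mp hb.symm)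
  have hba : b⁻¹ * b⁻¹ = a := by
    rw [← mul_inv, ← sq, hb, inv_inv]
  have key : ⁅(wN (Equiv.swap i j) : ↥(Subgroup.normalizer (diagonalTorus n K : Set (Matrix.SpecialLinearGroup (Fin n) K)))), elN i j b hij hb0⁆
      = elN i j a hij ha := by
    apply Subtype.ext
    rw [commutatorElement_def]
    simp only [Subgroup.coe_mul, Subgroup.coe_inv]
    show w (Equiv.swap i j) * elSL i j b hij hb0 * (w (Equiv.swap i j))⁻¹
        * (elSL i j b hij hb0)⁻¹ = elSL i j a hij ha
    rw [← commutatorElement_def, el_commutator]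
    apply Subtype.ext
    show diagonal (elFun i j (b⁻¹ * b⁻¹)) = diagonal (elFun i j a)
    rw [hba]
  rw [← key, commutator_def]
  exact Subgroup.commutator_mem_commutator (Subgroup.mem_top _) (Subgroup.mem_top _)

lemma coe_coe_mul (x y : ↥(Subgroup.normalizer (diagonalTorus n K : Set (Matrix.SpecialLinearGroup (Fin n) K)))) :
    (((x * y : ↥(Subgroup.normalizer (diagonalTorus n K : Set (Matrix.SpecialLinearGroup (Fin n) K)))) : Matrix.SpecialLinearGroup (Fin n) K) :
      Matrix (Fin n) (Fin n) K)
    = ((x : Matrix.SpecialLinearGroup (Fin n) K) : Matrix (Fin n) (Fin n) K)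
      * ((y : Matrix.SpecialLinearGroup (Fin n) K) : Matrix (Fin n) (Fin n) K) := rfl

lemma diag_mem_commutator (x : ↥(Subgroup.normalizer (diagonalTorus n K : Set (Matrix.SpecialLinearGroup (Fin n) K))))
    (hx : ((x : Matrix.SpecialLinearGroup (Fin n) K) : Matrix (Fin n) (Fin n) K).IsDiag) :
    x ∈ commutator ↥(Subgroup.normalizer (diagonalTorus n K : Set (Matrix.SpecialLinearGroup (Fin n) K))) := by
  classical
  set d := ((x : Matrix.SpecialLinearGroup (Fin n) K) : Matrix (Fin n) (Fin n) K).diag with hd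
  have hxd : ((x : Matrix.SpecialLinearGroup (Fin n) K) : Matrix (Fin n) (Fin n) K)
      = diagonal d := (Matrix.IsDiag.diagonal_diag hx).symm
  have hprod : ∏ k, d k = 1 := by
    have h := (x : Matrix.SpecialLinearGroup (Fin n) K).2
    rw [hxd, det_diagonal] at h
    exact h
  have hd0 : ∀ k, d k ≠ 0 := fun k =>
    Finset.prod_ne_zero_iff.mp (hprod ▸ one_ne_zero) k (Finset.mem_univ k)
  set dFun : Fin n → (Fin n → K) :=
    fun i => if i = (0 : Fin n) then (fun _ => 1) else elFun i 0 (d i) with hdFun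
  set F : Fin n → ↥(Subgroup.normalizer (diagonalTorus n K : Set (Matrix.SpecialLinearGroup (Fin n) K))) :=
    fun i => if h : i = (0 : Fin n) then 1 else elN i 0 (d i) h (hd0 i) with hF
  have hFcoe : ∀ i, ((F i : Matrix.SpecialLinearGroup (Fin n) K) : Matrix (Fin n) (Fin n) K)
      = diagonal (dFun i) := by
    intro i
    by_cases h : i = (0 : Fin n)
    · simp only [hF, hdFun, dif_pos h, if_pos h]
      show (1 : Matrix (Fin n) (Fin n) K) = _
      rw [← diagonal_one]
    · simp only [hF, hdFun, dif_neg h, if_neg h]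
      rfl
  have hFmem : ∀ i, F i ∈ commutator ↥(Subgroup.normalizer (diagonalTorus n K : Set (Matrix.SpecialLinearGroup (Fin n) K))) := by
    intro i
    by_cases h : i = (0 : Fin n)
    · simp only [hF, dif_pos h]
      exact Subgroup.one_mem _
    · simp only [hF, dif_neg h]
      exact elN_mem_commutator i 0 (d i) h (hd0 i)
  have hcommF : ∀ a b : Fin n, Commute (F a) (F b) := by
    intro a b
    show F a * F b = F b * F a
    apply Subtype.ext
    apply Subtype.ext
    show (((F a * F b : ↥(Subgroup.normalizer (diagonalTorus n K : Set (Matrix.SpecialLinearGroup (Fin n) K)))) :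
        Matrix.SpecialLinearGroup (Fin n) K) : Matrix (Fin n) (Fin n) K) = _
    rw [coe_coe_mul, coe_coe_mul, hFcoe, hFcoe, diagonal_mul_diagonal, diagonal_mul_diagonal]
    exact congrArg _ (mul_comm _ _)
  set s : Finset (Fin n) := Finset.univ.erase (0 : Fin n) with hs
  have hcM : (↑s : Set (Fin n)).Pairwise
      (Function.onFun Commute
        (fun i => ((F i : Matrix.SpecialLinearGroup (Fin n) K) : Matrix (Fin n) (Fin n) K))) :=
    fun a _ b _ _ => (hcommF a b).map (coeSL.comp (Subgroup.normalizer (diagonalTorus n K : Set (Matrix.SpecialLinearGroup (Fin n) K))).subtype)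
  have hcD : (↑s : Set (Fin n)).Pairwise
      (Function.onFun Commute (fun i => (diagonal (dFun i) : Matrix (Fin n) (Fin n) K))) := by
    intro a _ b _ _
    show Commute _ _
    rw [commute_iff_eq, diagonal_mul_diagonal, diagonal_mul_diagonal]
    exact congrArg diagonal (funext fun i => mul_comm _ _)
  have hxeq : x = s.noncommProd F (fun a _ b _ _ => hcommF a b) := by
    apply Subtype.ext
    apply Subtype.ext
    show ((x : Matrix.SpecialLinearGroup (Fin n) K) : Matrix (Fin n) (Fin n) K) = _
    have h1 : (((s.noncommProd F (fun a _ b _ _ => hcommF a b) :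
        ↥(Subgroup.normalizer (diagonalTorus n K : Set (Matrix.SpecialLinearGroup (Fin n) K)))) : Matrix.SpecialLinearGroup (Fin n) K) :
        Matrix (Fin n) (Fin n) K)
        = s.noncommProd
            (fun i => ((F i : Matrix.SpecialLinearGroup (Fin n) K) : Matrix (Fin n) (Fin n) K))
            hcM :=
      Finset.map_noncommProd s F _ (coeSL.comp (Subgroup.normalizer (diagonalTorus n K : Set (Matrix.SpecialLinearGroup (Fin n) K))).subtype)
    rw [h1, hxd]
    have h2 : s.noncommProd
        (fun i => ((F i : Matrix.SpecialLinearGroup (Fin n) K) : Matrix (Fin n) (Fin n) K)) hcM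
        = s.noncommProd (fun i => diagonal (dFun i)) hcD :=
      Finset.noncommProd_congr rfl (fun i _ => hFcoe i) _
    rw [h2]
    have h3 : s.noncommProd (fun i => diagonal (dFun i)) hcD
        = diagonal (∏ i ∈ s, dFun i) := by
      have h4 := Finset.map_noncommProd s dFun
        (fun a _ b _ _ => Commute.all _ _) (diagonalRingHom (Fin n) K)
      rw [Finset.noncommProd_eq_prod] at h4
      exact h4.symm
    rw [h3]
    refine congrArg diagonal (funext fun k => ?_)
    rw [Finset.prod_apply]
    have hterm : ∀ i ∈ s, dFun i k = elFun i 0 (d i) k := by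
      intro i hi
      rw [hdFun]
      simp only [if_neg (Finset.mem_erase.mp hi).1]
    rw [Finset.prod_congr rfl hterm]
    by_cases hk : k = (0 : Fin n)
    · subst hk
      have hterm2 : ∀ i ∈ s, elFun i 0 (d i) (0 : Fin n) = (d i)⁻¹ := by
        intro i hi
        have h0 : i ≠ 0 := (Finset.mem_erase.mp hi).1
        simp [elFun, Ne.symm h0]
      rw [Finset.prod_congr rfl hterm2, Finset.prod_inv_distrib]
      have hsplit : d 0 * ∏ i ∈ s, d i = 1 := by
        rw [hs, Finset.mul_prod_erase Finset.univ d (Finset.mem_univ 0)]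
        exact hprod
      have h5 : (∏ i ∈ s, d i) = (d 0)⁻¹ :=
        eq_inv_of_mul_eq_one_left (by rw [mul_comm] at hsplit; exact hsplit)
      rw [h5, inv_inv]
    · rw [Finset.prod_eq_single_of_mem k (Finset.mem_erase.mpr ⟨hk, Finset.mem_univ k⟩)]
      · simp [elFun]
      · intro i _ hik
        simp [elFun, Ne.symm hik, hk]
  rw [hxeq]
  exact (Subgroup.mem_toSubmonoid _ _).mp
    (Submonoid.noncommProd_mem _ s F _ fun i _ => (Subgroup.mem_toSubmonoid _ _).mpr (hFmem i))

noncomputable def sigmaN (g : ↥(Subgroup.normalizer (diagonalTorus n K : Set (Matrix.SpecialLinearGroup (Fin n) K)))) : Perm (Fin n) :=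
  Classical.choose (exists_permOf g.2)

lemma permOf_sigmaN (g : ↥(Subgroup.normalizer (diagonalTorus n K : Set (Matrix.SpecialLinearGroup (Fin n) K)))) :
    PermOf ((g : Matrix.SpecialLinearGroup (Fin n) K) : Matrix (Fin n) (Fin n) K) ⇑(sigmaN g) :=
  Classical.choose_spec (exists_permOf g.2)

lemma sigmaN_eq {g : ↥(Subgroup.normalizer (diagonalTorus n K : Set (Matrix.SpecialLinearGroup (Fin n) K)))} {σ : Perm (Fin n)}
    (h : PermOf ((g : Matrix.SpecialLinearGroup (Fin n) K) : Matrix (Fin n) (Fin n) K) ⇑σ) :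
    sigmaN g = σ :=
  Equiv.coe_fn_injective (permOf_unique (permOf_sigmaN g) h)

lemma sigmaN_one : sigmaN (1 : ↥(Subgroup.normalizer (diagonalTorus n K : Set (Matrix.SpecialLinearGroup (Fin n) K)))) = 1 := by
  apply sigmaN_eq
  have h : PermOf ((1 : Matrix.SpecialLinearGroup (Fin n) K) : Matrix (Fin n) (Fin n) K) id :=
    permOf_of_isDiag (by simpa using isDiag_one)
  simpa using h

lemma sigmaN_mul (g h : ↥(Subgroup.normalizer (diagonalTorus n K : Set (Matrix.SpecialLinearGroup (Fin n) K)))) :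
    sigmaN (g * h) = sigmaN h * sigmaN g := by
  apply sigmaN_eq
  have hm := permOf_mul (permOf_sigmaN g) (permOf_sigmaN h)
  have hc : ⇑(sigmaN h * sigmaN g) = ⇑(sigmaN h) ∘ ⇑(sigmaN g) := Equiv.Perm.coe_mul _ _
  rw [hc]
  exact hm

lemma sigmaN_wN (σ : Perm (Fin n)) : sigmaN (wN (K := K) σ) = σ :=
  sigmaN_eq (permOf_w σ)

lemma phi_commutator (φ : ↥(Subgroup.normalizer (diagonalTorus n K : Set (Matrix.SpecialLinearGroup (Fin n) K))) →* Kˣ) :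
    ∀ x ∈ commutator ↥(Subgroup.normalizer (diagonalTorus n K : Set (Matrix.SpecialLinearGroup (Fin n) K))), φ x = 1 := by
  intro x hx
  have hle : commutator ↥(Subgroup.normalizer (diagonalTorus n K : Set (Matrix.SpecialLinearGroup (Fin n) K))) ≤ φ.ker := by
    rw [commutator_def]
    apply Subgroup.commutator_le.mpr
    intro g _ h _
    rw [MonoidHom.mem_ker, map_commutatorElement]
    exact commutatorElement_eq_one_iff_commute.mpr (mul_comm _ _)
  exact hle hx

lemma phi_eq_w (φ : ↥(Subgroup.normalizer (diagonalTorus n K : Set (Matrix.SpecialLinearGroup (Fin n) K))) →* Kˣ)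
    (g : ↥(Subgroup.normalizer (diagonalTorus n K : Set (Matrix.SpecialLinearGroup (Fin n) K)))) : φ g = φ (wN (sigmaN g)) := by
  set u : ↥(Subgroup.normalizer (diagonalTorus n K : Set (Matrix.SpecialLinearGroup (Fin n) K))) := g * (wN (sigmaN g))⁻¹ with hu
  have hdiag : ((u : Matrix.SpecialLinearGroup (Fin n) K) : Matrix (Fin n) (Fin n) K).IsDiag := by
    have h := factor_mem_torus (σ := sigmaN g) (permOf_sigmaN g)
    exact h
  have hu1 : φ u = 1 := phi_commutator φ u (diag_mem_commutator u hdiag)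
  have hgu : g = u * wN (sigmaN g) := by rw [hu, inv_mul_cancel_right]
  calc φ g = φ (u * wN (sigmaN g)) := by rw [← hgu]
    _ = φ u * φ (wN (sigmaN g)) := _root_.map_mul φ _ _
    _ = φ (wN (sigmaN g)) := by rw [hu1, one_mul]

lemma psi_mul (φ : ↥(Subgroup.normalizer (diagonalTorus n K : Set (Matrix.SpecialLinearGroup (Fin n) K))) →* Kˣ) (σ τ : Perm (Fin n)) :
    φ (wN (σ * τ)) = φ (wN σ) * φ (wN τ) := by
  have h1 : sigmaN (wN (K := K) τ * wN σ) = σ * τ := by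
    rw [sigmaN_mul, sigmaN_wN, sigmaN_wN]
  have h2 := phi_eq_w φ (wN τ * wN σ)
  rw [h1, _root_.map_mul] at h2
  rw [← h2, mul_comm]

lemma wN_one : wN (K := K) (1 : Perm (Fin n)) = 1 := by
  apply Subtype.ext
  apply Subtype.ext
  show wMat (1 : Perm (Fin n)) = (1 : Matrix (Fin n) (Fin n) K)
  ext i j
  rw [wMat_apply]
  have hsign : (eps (1 : Perm (Fin n)) : K) = 1 := by simp [eps]
  by_cases h : i = j
  · subst h
    simp [Matrix.one_apply, hsign]
  · have : (1 : Perm (Fin n)) i = i := rfl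
    simp [Matrix.one_apply, h, this]

lemma psi_one (φ : ↥(Subgroup.normalizer (diagonalTorus n K : Set (Matrix.SpecialLinearGroup (Fin n) K))) →* Kˣ) : φ (wN 1) = 1 := by
  rw [wN_one, _root_.map_one]

lemma psi_conj (φ : ↥(Subgroup.normalizer (diagonalTorus n K : Set (Matrix.SpecialLinearGroup (Fin n) K))) →* Kˣ) (π ρ : Perm (Fin n)) :
    φ (wN (π * ρ * π⁻¹)) = φ (wN ρ) := by
  rw [psi_mul, psi_mul]
  have : φ (wN π) * φ (wN ρ) * φ (wN π⁻¹) = φ (wN ρ) * (φ (wN π) * φ (wN π⁻¹)) := by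
    rw [mul_comm (φ (wN π)) (φ (wN ρ)), mul_assoc]
  rw [this, ← psi_mul, mul_inv_cancel, psi_one, mul_one]

lemma psi_swap_sq (φ : ↥(Subgroup.normalizer (diagonalTorus n K : Set (Matrix.SpecialLinearGroup (Fin n) K))) →* Kˣ) {i j : Fin n} (hij : i ≠ j) :
    φ (wN (Equiv.swap i j)) * φ (wN (Equiv.swap i j)) = 1 := by
  rw [← psi_mul, Equiv.swap_mul_self, psi_one]

lemma psi_swap_eq (φ : ↥(Subgroup.normalizer (diagonalTorus n K : Set (Matrix.SpecialLinearGroup (Fin n) K))) →* Kˣ) {i j : Fin n}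
    (hij : i ≠ j) (h01 : (0 : Fin n) ≠ 1) :
    φ (wN (Equiv.swap i j)) = φ (wN (Equiv.swap 0 1)) := by
  obtain ⟨c, hc⟩ := isConj_iff.mp (Equiv.Perm.isConj_swap h01 hij)
  rw [← hc, psi_conj]

lemma phi_sign (φ : ↥(Subgroup.normalizer (diagonalTorus n K : Set (Matrix.SpecialLinearGroup (Fin n) K))) →* Kˣ) (h01 : (0 : Fin n) ≠ 1)
    (σ : Perm (Fin n)) :
    φ (wN σ) = if Equiv.Perm.sign σ = 1 then 1 else φ (wN (Equiv.swap 0 1)) := by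
  refine Equiv.Perm.swap_induction_on σ ?_ ?_
  · simp [psi_one]
  · intro f x y hxy ih
    rw [psi_mul, ih, psi_swap_eq φ hxy h01, _root_.map_mul, Equiv.Perm.sign_swap hxy]
    rcases Int.units_eq_one_or (Equiv.Perm.sign f) with hf | hf <;> rw [hf]
    · have hcond : ¬((-1 : ℤˣ) * 1 = 1) := by decide
      rw [if_pos rfl, if_neg hcond, mul_one]
    · have h1 : ¬((-1 : ℤˣ) = 1) := by decide
      have hcond : ((-1 : ℤˣ) * -1 = 1) := by decide
      rw [if_neg h1, if_pos hcond]
      exact psi_swap_sq φ h01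

/-- the map `ℤˣ → Kˣ`. -/
noncomputable def uK : ℤˣ →* Kˣ := Units.map (Int.castRingHom K).toMonoidHom

lemma uK_neg_one : uK (K := K) (-1) = -1 := by
  apply Units.ext
  show ((Int.castRingHom K) ((-1 : ℤˣ) : ℤ)) = ((-1 : Kˣ) : K)
  simp

lemma uK_one : uK (K := K) 1 = 1 := _root_.map_one _

/-- the sign character of the normalizer of the torus. -/
noncomputable def chi : ↥(Subgroup.normalizer (diagonalTorus n K : Set (Matrix.SpecialLinearGroup (Fin n) K))) →* Kˣ where
  toFun g := uK (Equiv.Perm.sign (sigmaN g))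
  map_one' := by
    show uK (Equiv.Perm.sign (sigmaN (1 : ↥(Subgroup.normalizer (diagonalTorus n K : Set (Matrix.SpecialLinearGroup (Fin n) K)))))) = 1
    rw [sigmaN_one, _root_.map_one, _root_.map_one]
  map_mul' g h := by
    show uK (Equiv.Perm.sign (sigmaN (g * h)))
      = uK (Equiv.Perm.sign (sigmaN g)) * uK (Equiv.Perm.sign (sigmaN h))
    rw [sigmaN_mul, _root_.map_mul, _root_.map_mul, mul_comm]

lemma chi_apply (g : ↥(Subgroup.normalizer (diagonalTorus n K : Set (Matrix.SpecialLinearGroup (Fin n) K)))) :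
    chi g = uK (Equiv.Perm.sign (sigmaN g)) := rfl

lemma chi_wN (σ : Perm (Fin n)) :
    chi (wN (K := K) σ) = uK (Equiv.Perm.sign σ) := by
  rw [chi_apply, sigmaN_wN]

lemma chi_swap (h01 : (0 : Fin n) ≠ 1) :
    chi (wN (n := n) (K := K) (Equiv.swap 0 1)) = -1 := by
  rw [chi_wN, Equiv.Perm.sign_swap h01, uK_neg_one]

lemma neg_one_ne_one_K : ((-1 : Kˣ)) ≠ 1 := by
  intro h
  have h2 : ((-1 : Kˣ) : K) = ((1 : Kˣ) : K) := congrArg _ h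
  rw [Units.val_one, Units.val_neg, Units.val_one] at h2
  norm_num at h2

lemma chi_ne_one (h01 : (0 : Fin n) ≠ 1) :
    (chi : ↥(Subgroup.normalizer (diagonalTorus n K : Set (Matrix.SpecialLinearGroup (Fin n) K))) →* Kˣ) ≠ 1 := by
  intro h
  have h2 := chi_swap (K := K) h01
  rw [h] at h2
  exact neg_one_ne_one_K h2.symm

lemma chi_mul_chi :
    (chi : ↥(Subgroup.normalizer (diagonalTorus n K : Set (Matrix.SpecialLinearGroup (Fin n) K))) →* Kˣ) * chi = 1 := by
  apply MonoidHom.ext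
  intro g
  show chi g * chi g = (1 : Kˣ)
  rw [chi_apply, ← _root_.map_mul, Int.units_mul_self, uK_one]

lemma phi_cases (h01 : (0 : Fin n) ≠ 1) (φ : ↥(Subgroup.normalizer (diagonalTorus n K : Set (Matrix.SpecialLinearGroup (Fin n) K))) →* Kˣ) :
    φ = 1 ∨ φ = chi := by
  set c : Kˣ := φ (wN (Equiv.swap 0 1)) with hc
  have hcc : c * c = 1 := psi_swap_sq φ h01
  have hcK : ((c : K)) * (c : K) = 1 := by
    have h3 := congrArg (fun u : Kˣ => (u : K)) hcc
    simpa using h3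
  rcases mul_self_eq_one_iff.mp hcK with h1 | h1
  · left
    apply MonoidHom.ext
    intro g
    show φ g = (1 : Kˣ)
    rw [phi_eq_w φ g, phi_sign φ h01, ← hc]
    have hc1 : c = 1 := Units.ext (by rw [h1]; rfl)
    rw [hc1]
    split_ifs <;> rfl
  · right
    apply MonoidHom.ext
    intro g
    show φ g = chi g
    rw [phi_eq_w φ g, phi_sign φ h01, ← hc, chi_apply]
    have hc1 : c = -1 := Units.ext (by rw [h1]; rfl)
    rcases Int.units_eq_one_or (Equiv.Perm.sign (sigmaN g)) with hs | hs
    · rw [hs, if_pos rfl, uK_one]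
    · have hns : ¬(Equiv.Perm.sign (sigmaN g) = 1) := by rw [hs]; decide
      rw [if_neg hns, hs, uK_neg_one, hc1]

end SLChar

theorem characters_of_normalizer_of_torus_in_SL (hn : 2 ≤ n) :
    (diagonalTorus n K ≤
      Subgroup.map (Subgroup.normalizer (diagonalTorus n K : Set (Matrix.SpecialLinearGroup (Fin n) K))).subtype
        (commutator ↥(Subgroup.normalizer (diagonalTorus n K : Set (Matrix.SpecialLinearGroup (Fin n) K))))) ∧
    Nonempty ((↥(Subgroup.normalizer (diagonalTorus n K : Set (Matrix.SpecialLinearGroup (Fin n) K))) →* Kˣ) ≃* Multiplicative (ZMod 2)) := by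
  haveI : NeZero n := ⟨by omega⟩
  have h01 : (0 : Fin n) ≠ 1 := by
    intro h
    have h2 := congrArg Fin.val h
    rw [Fin.val_zero, Fin.val_one'] at h2
    rw [Nat.mod_eq_of_lt hn] at h2
    exact one_ne_zero h2.symm
  constructor
  · intro x hx
    exact Subgroup.mem_map.mpr
      ⟨⟨x, Subgroup.le_normalizer hx⟩, SLChar.diag_mem_commutator _ hx, rfl⟩
  · classical
    have hoa : (Multiplicative.ofAdd (1 : ZMod 2)) ≠ 1 := by decide
    refine ⟨
      { toFun := fun φ => if φ = 1 then 1 else Multiplicative.ofAdd (1 : ZMod 2)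
        invFun := fun x => if x = 1 then 1 else SLChar.chi
        left_inv := ?_
        right_inv := ?_
        map_mul' := ?_ }⟩
    · intro φ
      rcases SLChar.phi_cases h01 φ with h | h
      · simp [h]
      · simp [h, SLChar.chi_ne_one h01, hoa]
    · intro x
      rcases (by decide : ∀ y : Multiplicative (ZMod 2),
          y = 1 ∨ y = Multiplicative.ofAdd (1 : ZMod 2)) x with h | h
      · simp [h]
      · simp [h, hoa, SLChar.chi_ne_one h01]
    · intro φ ψ
      have e1 : (1 : ↥(Subgroup.normalizer (diagonalTorus n K : Set (Matrix.SpecialLinearGroup (Fin n) K))) →* Kˣ) * 1 = 1 := by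
        apply MonoidHom.ext
        intro g
        simp
      have e2 : (1 : ↥(Subgroup.normalizer (diagonalTorus n K : Set (Matrix.SpecialLinearGroup (Fin n) K))) →* Kˣ) * SLChar.chi = SLChar.chi := by
        apply MonoidHom.ext
        intro g
        simp
      have e3 : (SLChar.chi : ↥(Subgroup.normalizer (diagonalTorus n K : Set (Matrix.SpecialLinearGroup (Fin n) K))) →* Kˣ) * 1 = SLChar.chi := by
        apply MonoidHom.ext
        intro g
        simp
      have e4 : (SLChar.chi : ↥(Subgroup.normalizer (diagonalTorus n K : Set (Matrix.SpecialLinearGroup (Fin n) K))) →* Kˣ) * SLChar.chi = 1 := SLChar.chi_mul_chi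
      rcases SLChar.phi_cases h01 φ with h | h <;> rcases SLChar.phi_cases h01 ψ with h' | h' <;>
        rw [h, h']
      · rw [e1]
        simp
      · rw [e2]
        simp [SLChar.chi_ne_one h01]
      · rw [e3]
        simp [SLChar.chi_ne_one h01]
      · rw [e4]
        simp [SLChar.chi_ne_one h01]
        try decide
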